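/- If X is an SLT space at x₀, then the small loop subgroup π₁^s(X,x₀) equals the path Spanier group π̃₁^{sp}(X,x₀). -/

import Mathlib

open CategoryTheory unitInterval
open scoped Topology

attribute [local instance] Path.Homotopic.setoid

noncomputable section

/-- The homotopy class of a loop as an element of the fundamental group. -/
def loopClass {X : Type*} [TopologicalSpace X] {x : X} (γ : Path x x) :
    FundamentalGroup X x :=
  FundamentalGroup.fromPath
    (⟦γ⟧ : Path.Homotopic.Quotient x x)

variable {X : Type*} [TopologicalSpace X]

/-- The Spanier group of a family of subsets of `X`, based at `x`: the subgroup generated by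
classes `[α∗β∗α⁻¹]` where `α` is a path from `x` and `β` is a loop inside a member of `𝒰`. -/
def spanierGroupAt (x : X) (𝒰 : Set (Set X)) : Subgroup (FundamentalGroup X x) :=
  Subgroup.closure {g | ∃ (y : X) (α : Path x y) (β : Path y y) (U : Set X),
    U ∈ 𝒰 ∧ (∀ t, β t ∈ U) ∧ g = loopClass (α.trans (β.trans α.symm))}

/-- `𝒰` is an open cover of `X`. -/
def IsOpenCover (𝒰 : Set (Set X)) : Prop := (∀ U ∈ 𝒰, IsOpen U) ∧ ⋃₀ 𝒰 = Set.univ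

/-- `X` is a strong `H`-SLT space at `x₀`: for every `x ∈ X` and every open neighborhood `U`
of `x₀` there is an open neighborhood `V` of `x` such that for every loop `β` in `V` based at
`x` and every path `α` from `x₀` to `x` there is a loop `λ` in `U` based at `x₀` with
`[α∗β∗α⁻¹∗λ⁻¹] ∈ H`. -/
def StrongHSLTAt (x₀ : X) (H : Subgroup (FundamentalGroup X x₀)) : Prop :=
  ∀ (x : X) (U : Set X), IsOpen U → x₀ ∈ U →
    ∃ V : Set X, IsOpen V ∧ x ∈ V ∧
      ∀ (β : Path x x), (∀ t, β t ∈ V) → ∀ (α : Path x₀ x),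
        ∃ lam : Path x₀ x₀, (∀ t, lam t ∈ U) ∧
          loopClass (α.trans (β.trans α.symm)) * (loopClass lam)⁻¹ ∈ H

/-- The set of classes of small loops at `x₀`: loops that, for every open neighborhood `U`
of `x₀`, are homotopic (rel endpoints) to a loop inside `U`. -/
def smallLoopSet (x₀ : X) : Set (FundamentalGroup X x₀) :=
  {g | ∀ U : Set X, IsOpen U → x₀ ∈ U →
    ∃ γ : Path x₀ x₀, (∀ t, γ t ∈ U) ∧ loopClass γ = g}

/-- A path open cover: a choice, for each path `α` from `x₀`, of an open neighborhood
of its endpoint `α(1)`. -/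
def IsPathOpenCover (x₀ : X) (V : (Σ y : X, Path x₀ y) → Set X) : Prop :=
  ∀ a, IsOpen (V a) ∧ a.1 ∈ V a

/-- The path Spanier subgroup `π̃(𝒱, x₀)`, generated by `[α∗β∗α⁻¹]` with `β` a loop
in `V_α`. -/
def pathSpanierSub (x₀ : X) (V : (Σ y : X, Path x₀ y) → Set X) :
    Subgroup (FundamentalGroup X x₀) :=
  Subgroup.closure {g | ∃ (y : X) (α : Path x₀ y) (β : Path y y),
    (∀ t, β t ∈ V ⟨y, α⟩) ∧ g = loopClass (α.trans (β.trans α.symm))}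

/-- The path Spanier group `π̃₁^{sp}(X, x₀)`: the intersection of all path Spanier
subgroups over path open covers. -/
def pathSpanierWhole (x₀ : X) : Subgroup (FundamentalGroup X x₀) :=
  ⨅ (V : (Σ y : X, Path x₀ y) → Set X) (_ : IsPathOpenCover x₀ V), pathSpanierSub x₀ V

/-- The Spanier group `π₁^{sp}(X, x₀)`: the intersection of the Spanier subgroups over all
open covers of `X`. -/
def spanierWhole (x₀ : X) : Subgroup (FundamentalGroup X x₀) :=
  ⨅ (𝒰 : Set (Set X)) (_ : IsOpenCover 𝒰), spanierGroupAt x₀ 𝒰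

/-- `X` is an SLT space at `x₀`. -/
def SLTAt (x₀ : X) : Prop :=
  ∀ (y : X) (α : Path x₀ y) (U : Set X), IsOpen U → x₀ ∈ U →
    ∃ V : Set X, IsOpen V ∧ y ∈ V ∧
      ∀ (β : Path y y), (∀ t, β t ∈ V) →
        ∃ lam : Path x₀ x₀, (∀ t, lam t ∈ U) ∧
          loopClass (α.trans (β.trans α.symm)) = loopClass lam


lemma loopClass_hom {x : X} (γ : Path x x) :
    FundamentalGroup.toPath (loopClass γ) = (⟦γ⟧ : Path.Homotopic.Quotient x x) := rfl

lemma loopClass_eq_iff {x : X} (γ₁ γ₂ : Path x x) :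
    loopClass γ₁ = loopClass γ₂ ↔ (⟦γ₁⟧ : Path.Homotopic.Quotient x x) = ⟦γ₂⟧ := by
  constructor
  · intro h
    exact h
  · intro h
    exact h

lemma loopClass_refl {x : X} : loopClass (Path.refl x) = 1 := by
  rfl

lemma loopClass_mul {x : X} (γ₁ γ₂ : Path x x) :
    loopClass γ₁ * loopClass γ₂ = loopClass (γ₂.trans γ₁) := by
  rfl

lemma loopClass_inv {x : X} (γ : Path x x) :
    (loopClass γ)⁻¹ = loopClass γ.symm := by
  symm
  apply eq_inv_of_mul_eq_one_left
  rw [loopClass_mul]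
  rw [← loopClass_refl (x := x)]
  rw [loopClass_eq_iff]
  exact Quotient.sound ⟨(Path.Homotopy.reflTransSymm γ).symm⟩

lemma loopClass_refl_conj {x : X} (γ : Path x x) :
    loopClass ((Path.refl x).trans (γ.trans (Path.refl x).symm)) = loopClass γ := by
  rw [loopClass_eq_iff]
  apply Quotient.sound
  have h1 : (γ.trans (Path.refl x).symm).Homotopic γ := by
    rw [Path.refl_symm]
    exact ⟨Path.Homotopy.transRefl γ⟩
  have h2 : ((Path.refl x).trans (γ.trans (Path.refl x).symm)).Homotopic
      ((Path.refl x).trans γ) := Path.Homotopic.hcomp (Path.Homotopic.refl _) h1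
  exact h2.trans ⟨Path.Homotopy.reflTrans γ⟩

/-- The subgroup of classes represented by loops inside `U`. -/
def loopsInSub (x₀ : X) (U : Set X) (hx : x₀ ∈ U) : Subgroup (FundamentalGroup X x₀) where
  carrier := {g | ∃ γ : Path x₀ x₀, (∀ t, γ t ∈ U) ∧ loopClass γ = g}
  one_mem' := ⟨Path.refl x₀, fun _ => hx, loopClass_refl⟩
  mul_mem' := by
    rintro a b ⟨γ₁, h₁, rfl⟩ ⟨γ₂, h₂, rfl⟩
    refine ⟨γ₂.trans γ₁, ?_, (loopClass_mul γ₁ γ₂).symm⟩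
    intro t
    simp only [Path.trans_apply]
    split <;> [exact h₂ _; exact h₁ _]
  inv_mem' := by
    rintro a ⟨γ, h, rfl⟩
    exact ⟨γ.symm, fun t => h _, (loopClass_inv γ).symm⟩

theorem smallLoopSet_eq_pathSpanier_of_SLT {x₀ : X} (hSLT : SLTAt x₀) :
    smallLoopSet x₀ = (pathSpanierWhole x₀ : Set (FundamentalGroup X x₀)) := by
  ext g
  simp only [smallLoopSet, Set.mem_setOf_eq, SetLike.mem_coe, pathSpanierWhole,
    Subgroup.mem_iInf]
  constructor
  · intro hg V hV
    obtain ⟨hUo, hxU⟩ := hV ⟨x₀, Path.refl x₀⟩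
    obtain ⟨γ, hγ, hγc⟩ := hg _ hUo hxU
    apply Subgroup.subset_closure
    exact ⟨x₀, Path.refl x₀, γ, hγ, by rw [loopClass_refl_conj, hγc]⟩
  · intro hg U hUo hxU
    choose V hVo hVmem hVspec using fun (a : Σ y : X, Path x₀ y) =>
      hSLT a.1 a.2 U hUo hxU
    have hcov : IsPathOpenCover x₀ V := fun a => ⟨hVo a, hVmem a⟩
    have key : pathSpanierSub x₀ V ≤ loopsInSub x₀ U hxU := by
      rw [pathSpanierSub, Subgroup.closure_le]
      rintro g ⟨y, α, β, hβ, rfl⟩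
      obtain ⟨lam, hlam, hlamc⟩ := hVspec ⟨y, α⟩ β hβ
      exact ⟨lam, hlam, hlamc.symm⟩
    exact key (hg V hcov)

end
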